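/- Let p be a Lebesgue density with a gap of size ε at level λ_*: for S = {x : p(x) ≥ λ* } with λ* = λ_* + ε, we have inf_{x ∈ S} p(x) ≥ λ* and sup_{x ∉ S} p(x) ≤ λ_*. Let p̂_h be the spherical-kernel density estimator from an i.i.d. sample X₁,…,Xₙ and suppose sup_x |p̂_h(x) − p_h(x)| ≤ aₙ with ε > 2aₙ, where p_h(x) = P(B(x,h))/(h^d V_d). Then for any λ ∈ (λ_* + aₙ, λ* − aₙ), the set D̂_h(λ) = {X_i : p̂_h(X_i) ≥ λ} satisfies S_{−h} ∩ {X₁,…,Xₙ} ⊆ D̂_h(λ) ⊆ S_h. -/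

import Mathlib

open Metric Set MeasureTheory

/-- Volume of the unit ball in `ℝ^d`. -/
noncomputable def Vd (d : ℕ) : ℝ :=
  (volume (closedBall (0 : EuclideanSpace ℝ (Fin d)) 1)).toReal

open Classical in
/-- The spherical-kernel (DBSCAN) density estimator based on the sample `X`. -/
noncomputable def sphKDE (d n : ℕ) (X : Fin n → EuclideanSpace ℝ (Fin d)) (h : ℝ)
    (x : EuclideanSpace ℝ (Fin d)) : ℝ :=
  ((Finset.univ.filter fun i => X i ∈ closedBall x h).card : ℝ) / (n * h ^ d * Vd d)

/-- The expectation `p_h(x) = P(B(x,h))/(h^d V_d)` of the spherical KDE. -/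
noncomputable def smoothed (d : ℕ) (p : EuclideanSpace ℝ (Fin d) → ℝ) (h : ℝ)
    (x : EuclideanSpace ℝ (Fin d)) : ℝ :=
  (∫ z in closedBall x h, p z) / (h ^ d * Vd d)

/-- The closed `h`-enlargement of a set. -/
def enl {X : Type*} [PseudoMetricSpace X] (B : Set X) (h : ℝ) : Set X :=
  ⋃ x ∈ B, Metric.closedBall x h

/-- The `h`-erosion of a set. -/
def ero {X : Type*} [PseudoMetricSpace X] (B : Set X) (h : ℝ) : Set X :=
  {x ∈ B | Metric.closedBall x h ⊆ B}

theorem stmt11 (d n : ℕ) (p : EuclideanSpace ℝ (Fin d) → ℝ)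
    (hmeas : Measurable p) (hp0 : ∀ x, 0 ≤ p x) (hone : ∫ x, p x = 1)
    (lstar ε : ℝ) (hε : 0 < ε)
    -- gap of size ε at level lstar: S = {p ≥ lstar + ε} and p ≤ lstar off S
    (hgap : ∀ x, p x < lstar + ε → p x ≤ lstar)
    (X : Fin n → EuclideanSpace ℝ (Fin d)) (h : ℝ) (hh : 0 < h)
    (an : ℝ) (han : 0 ≤ an) (hεan : 2 * an < ε)
    (hclose : ∀ x, |sphKDE d n X h x - smoothed d p h x| ≤ an)
    (l : ℝ) (hl : l ∈ Set.Ioo (lstar + an) (lstar + ε - an)) :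
    (∀ i : Fin n, X i ∈ ero {x | lstar + ε ≤ p x} h → l ≤ sphKDE d n X h (X i)) ∧
    (∀ i : Fin n, l ≤ sphKDE d n X h (X i) → X i ∈ enl {x | lstar + ε ≤ p x} h) := by
  have hInt : Integrable p := by
    by_contra hc
    rw [integral_undef hc] at hone
    exact one_ne_zero hone.symm
  have hVd : 0 < Vd d := by
    have h2 : 0 < volume (closedBall (0 : EuclideanSpace ℝ (Fin d)) 1) :=
      measure_closedBall_pos _ _ one_pos
    exact ENNReal.toReal_pos h2.ne' measure_closedBall_lt_top.ne
  have hdenom : 0 < h ^ d * Vd d := mul_pos (pow_pos hh d) hVd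
  have hvol : ∀ x : EuclideanSpace ℝ (Fin d),
      (volume (closedBall x h)).toReal = h ^ d * Vd d := by
    intro x
    rw [Measure.addHaar_closedBall' _ _ hh.le, finrank_euclideanSpace, Fintype.card_fin,
      ENNReal.toReal_mul, ENNReal.toReal_ofReal (by positivity), Vd]
  constructor
  · intro i hi
    have hsub : closedBall (X i) h ⊆ {x | lstar + ε ≤ p x} := hi.2
    have hlow : (lstar + ε) * (h ^ d * Vd d) ≤ ∫ z in closedBall (X i) h, p z := by
      have := setIntegral_mono_on
        (integrableOn_const measure_closedBall_lt_top.ne)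
        hInt.integrableOn measurableSet_closedBall
        (fun z hz => hsub hz)
      rwa [setIntegral_const, smul_eq_mul, measureReal_def, hvol, mul_comm] at this
    have hsm : lstar + ε ≤ smoothed d p h (X i) := by
      rw [smoothed, le_div_iff₀ hdenom]
      linarith
    have habs := abs_le.mp (hclose (X i))
    have := hl.2
    linarith [habs.1]
  · intro i hli
    by_contra hne
    have hball : ∀ z ∈ closedBall (X i) h, p z ≤ lstar := by
      intro z hz
      apply hgap
      by_contra hzc
      push_neg at hzc
      exact hne (mem_biUnion (by exact hzc : z ∈ {x | lstar + ε ≤ p x})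
        (by rwa [mem_closedBall, dist_comm, ← mem_closedBall]))
    have hup : (∫ z in closedBall (X i) h, p z) ≤ lstar * (h ^ d * Vd d) := by
      have := setIntegral_mono_on hInt.integrableOn
        (integrableOn_const measure_closedBall_lt_top.ne)
        measurableSet_closedBall hball
      rwa [setIntegral_const, smul_eq_mul, measureReal_def, hvol, mul_comm] at this
    have hsm : smoothed d p h (X i) ≤ lstar := by
      rw [smoothed, div_le_iff₀ hdenom]
      linarith
    have habs := abs_le.mp (hclose (X i))
    have := hl.1
    linarith [habs.2]
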